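/- Let B be a semisimple algebra with distinguished idempotents e₁,…,e_m such that e₁ + ⋯ + e_m is invertible (or more generally acts as identity in B̃), and let B̃ be the painted algebra. Then every simple B̃-module P is isomorphic to the painted module S̃ of some simple B-module S. -/

import Mathlib

open Finset

/-- Absorption: if `a` is idempotent and `a * x * b = x` then `a * x = x`. -/
theorem absorb_left {B : Type*} [Ring B] {a b x : B} (ha : a * a = a)
    (h : a * x * b = x) : a * x = x := by
  conv_lhs => rw [← h]
  rw [← mul_assoc, ← mul_assoc, ha, h]

theorem absorb_right {B : Type*} [Ring B] {a b x : B} (hb : b * b = b)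
    (h : a * x * b = x) : x * b = x := by
  conv_lhs => rw [← h]
  rw [mul_assoc (a * x) b b, hb, h]

/-- A family of distinguished idempotents in a ring `B`. -/
structure IdemFamily (B : Type*) [Ring B] (m : ℕ) where
  e : Fin m → B
  idem : ∀ i, e i * e i = e i

variable {B : Type*} [Ring B] {m : ℕ}

/-- The painted algebra `B̃ = ⊕_{i,j} e_i B e_j`, realized as the non-unital subring of
`m × m` matrices over `B` whose `(i,j)` entry lies in `e_i B e_j`.  Its multiplication
`(e_i b e_j)·(e_k b' e_ℓ) = δ_{jk} e_i b e_j b' e_ℓ` is exactly matrix multiplication. -/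
def paintedSubring (E : IdemFamily B m) : NonUnitalSubring (Matrix (Fin m) (Fin m) B) where
  carrier := {x | ∀ i j, E.e i * x i j * E.e j = x i j}
  zero_mem' := by intro i j; simp
  add_mem' := by
    intro x y hx hy i j
    have : (x + y) i j = x i j + y i j := rfl
    rw [this, mul_add, add_mul, hx i j, hy i j]
  neg_mem' := by
    intro x hx i j
    have : (-x) i j = -(x i j) := rfl
    rw [this, mul_neg, neg_mul, hx i j]
  mul_mem' := by
    intro x y hx hy i j
    show E.e i * (x * y) i j * E.e j = (x * y) i j
    simp only [Matrix.mul_apply, Finset.mul_sum, Finset.sum_mul]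
    refine Finset.sum_congr rfl fun l _ => ?_
    rw [← mul_assoc, absorb_left (E.idem i) (hx i l), mul_assoc,
      absorb_right (E.idem j) (hy l j)]

/-- The painted algebra associated to a family of idempotents. -/
def PaintedAlgebra (E : IdemFamily B m) : Type _ := ↥(paintedSubring E)

instance (E : IdemFamily B m) : NonUnitalRing (PaintedAlgebra E) :=
  inferInstanceAs (NonUnitalRing ↥(paintedSubring E))

/-- The painted algebra is a (unital) ring, with unit the diagonal matrix `diag(e₁,…,e_m)`. -/
instance (E : IdemFamily B m) : Ring (PaintedAlgebra E) :=
  { (inferInstance : NonUnitalRing (PaintedAlgebra E)) with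
    one := ⟨Matrix.diagonal E.e, by
      intro i j
      by_cases h : i = j
      · subst h; simp [Matrix.diagonal_apply_eq, E.idem i]
      · simp [Matrix.diagonal_apply_ne _ h]⟩
    one_mul := by
      intro x
      apply Subtype.ext
      ext i j
      show (Matrix.diagonal E.e * x.val) i j = x.val i j
      rw [Matrix.diagonal_mul]
      exact absorb_left (E.idem i) (x.prop i j)
    mul_one := by
      intro x
      apply Subtype.ext
      ext i j
      show (x.val * Matrix.diagonal E.e) i j = x.val i j
      rw [Matrix.mul_diagonal]
      exact absorb_right (E.idem j) (x.prop i j) }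
/-- The painted module `M̃ = ⊕_i e_i M`, realized as the additive subgroup of `Fin m → M`
consisting of tuples with `i`-th coordinate in `e_i M`. -/
def paintedSubgroup (E : IdemFamily B m) (M : Type*) [AddCommGroup M] [Module B M] :
    AddSubgroup (Fin m → M) where
  carrier := {v | ∀ i, E.e i • v i = v i}
  zero_mem' := by intro i; simp
  add_mem' := by
    intro v w hv hw i
    have : (v + w) i = v i + w i := rfl
    rw [this, smul_add, hv i, hw i]
  neg_mem' := by
    intro v hv i
    have : (-v) i = -(v i) := rfl
    rw [this, smul_neg, hv i]

/-- The painted module associated to a `B`-module `M`. -/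
def PaintedModule (E : IdemFamily B m) (M : Type*) [AddCommGroup M] [Module B M] : Type _ :=
  ↥(paintedSubgroup E M)

instance (E : IdemFamily B m) (M : Type*) [AddCommGroup M] [Module B M] :
    AddCommGroup (PaintedModule E M) :=
  inferInstanceAs (AddCommGroup ↥(paintedSubgroup E M))

instance (E : IdemFamily B m) (M : Type*) [AddCommGroup M] [Module B M] :
    SMul (PaintedAlgebra E) (PaintedModule E M) where
  smul x v := ⟨fun i => ∑ j, x.val i j • v.val j, by
    intro i
    rw [Finset.smul_sum]
    refine Finset.sum_congr rfl fun j _ => ?_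
    rw [← mul_smul, absorb_left (E.idem i) (x.prop i j)]⟩

theorem painted_smul_apply (E : IdemFamily B m) (M : Type*) [AddCommGroup M] [Module B M]
    (x : PaintedAlgebra E) (v : PaintedModule E M) (i : Fin m) :
    (x • v).val i = ∑ j, x.val i j • v.val j := rfl

/-- The painted module is a module over the painted algebra, with the action
`(e_i b e_j) • (e_k m) = δ_{jk} (e_i b e_j) • m`  (matrix–vector multiplication). -/
instance (E : IdemFamily B m) (M : Type*) [AddCommGroup M] [Module B M] :
    Module (PaintedAlgebra E) (PaintedModule E M) where
  one_smul v := by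
    apply Subtype.ext
    funext i
    rw [painted_smul_apply]
    show (∑ j, Matrix.diagonal E.e i j • v.val j) = v.val i
    rw [Finset.sum_eq_single i]
    · rw [Matrix.diagonal_apply_eq]; exact v.prop i
    · intro j _ hj
      rw [Matrix.diagonal_apply_ne _ (Ne.symm hj), zero_smul]
    · intro h; exact absurd (Finset.mem_univ i) h
  mul_smul x y v := by
    apply Subtype.ext
    funext i
    rw [painted_smul_apply]
    show (∑ j, (x.val * y.val) i j • v.val j) = ∑ j, x.val i j • (y • v).val j
    simp only [Matrix.mul_apply, painted_smul_apply, Finset.sum_smul, Finset.smul_sum,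
      mul_smul]
    exact Finset.sum_comm
  smul_zero x := by
    apply Subtype.ext
    funext i
    rw [painted_smul_apply]
    show (∑ j, x.val i j • (0 : Fin m → M) j) = (0 : Fin m → M) i
    simp
  smul_add x v w := by
    apply Subtype.ext
    funext i
    simp only [painted_smul_apply]
    show (∑ j, x.val i j • (v.val j + w.val j)) = _
    simp only [smul_add, Finset.sum_add_distrib]
    rfl
  add_smul x y v := by
    apply Subtype.ext
    funext i
    simp only [painted_smul_apply]
    show (∑ j, (x.val i j + y.val i j) • v.val j) = _
    simp only [add_smul, Finset.sum_add_distrib]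
    rfl
  zero_smul v := by
    apply Subtype.ext
    funext i
    rw [painted_smul_apply]
    show (∑ j, (0 : Matrix (Fin m) (Fin m) B) i j • v.val j) = 0
    simp

section Stmt6Aux

lemma sandwich {a c x : B} (ha : a * a = a) (hc : c * c = c) :
    a * (a * x * c) * c = a * x * c := by
  have h1 : a * (a * x * c) = a * x * c := by rw [← mul_assoc, ← mul_assoc, ha]
  rw [h1, mul_assoc, hc]

variable (E : IdemFamily B m)

lemma e_smul_eq (M : Type*) [AddCommGroup M] [Module B M] (v : PaintedModule E M)
    (i : Fin m) : E.e i • v.val i = v.val i := v.prop i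

lemma e_mul_eq (v : PaintedModule E B) (i : Fin m) : E.e i * v.val i = v.val i := by
  have := v.prop i; rwa [smul_eq_mul] at this

/-- The element of the painted module of `B` supported at coordinate `i`
with value `e_i * b`. -/
def psingle (i : Fin m) (b : B) : PaintedModule E B :=
  ⟨fun l => if l = i then E.e i * b else 0, by
    intro l
    show E.e l • (if l = i then E.e i * b else 0) = (if l = i then E.e i * b else 0)
    by_cases h : l = i
    · rw [if_pos h, h, smul_eq_mul, ← mul_assoc, E.idem i]
    · rw [if_neg h, smul_zero]⟩

lemma psingle_val (i : Fin m) (b : B) (l : Fin m) :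
    (psingle E i b).val l = if l = i then E.e i * b else 0 := rfl

lemma psingle_zero (i : Fin m) : psingle E i 0 = 0 := by
  apply Subtype.ext; funext l
  rw [psingle_val]
  show _ = (0 : Fin m → B) l
  by_cases h : l = i
  · rw [if_pos h, mul_zero]; rfl
  · rw [if_neg h]; rfl

lemma psingle_add (i : Fin m) (b c : B) :
    psingle E i (b + c) = psingle E i b + psingle E i c := by
  apply Subtype.ext; funext l
  show (psingle E i (b + c)).val l = (psingle E i b).val l + (psingle E i c).val l
  rw [psingle_val, psingle_val, psingle_val]
  by_cases h : l = i
  · rw [if_pos h, if_pos h, if_pos h, mul_add]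
  · rw [if_neg h, if_neg h, if_neg h, add_zero]

lemma sum_psingle (v : PaintedModule E B) : ∑ i, psingle E i (v.val i) = v := by
  apply Subtype.ext
  have h1 : (∑ i, psingle E i (v.val i)).val = ∑ i, (psingle E i (v.val i)).val :=
    AddSubmonoidClass.coe_finset_sum _ _
  rw [h1]
  funext l
  rw [Finset.sum_apply, Finset.sum_eq_single l]
  · rw [psingle_val, if_pos rfl, e_mul_eq]
  · intro i _ hi
    rw [psingle_val, if_neg (fun h => hi h.symm)]
  · intro h; exact absurd (Finset.mem_univ l) h

/-- The element of the painted algebra obtained from `v` by putting `v_i * e_j` in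
column `j`. -/
def thetaEl (j : Fin m) (v : PaintedModule E B) : PaintedAlgebra E :=
  ⟨fun i l => if l = j then v.val i * E.e j else 0, by
    intro i l
    show E.e i * (if l = j then v.val i * E.e j else 0) * E.e l
        = (if l = j then v.val i * E.e j else 0)
    by_cases h : l = j
    · rw [if_pos h, h, ← e_mul_eq E v i]
      exact sandwich (E.idem i) (E.idem j)
    · rw [if_neg h, mul_zero, zero_mul]⟩

lemma thetaEl_val (j : Fin m) (v : PaintedModule E B) (i l : Fin m) :
    (thetaEl E j v).val i l = if l = j then v.val i * E.e j else 0 := rfl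

lemma thetaEl_add (j : Fin m) (v w : PaintedModule E B) :
    thetaEl E j (v + w) = thetaEl E j v + thetaEl E j w := by
  apply Subtype.ext; ext i l
  show (thetaEl E j (v + w)).val i l = (thetaEl E j v).val i l + (thetaEl E j w).val i l
  rw [thetaEl_val, thetaEl_val, thetaEl_val]
  have hvw : (v + w).val i = v.val i + w.val i := rfl
  by_cases h : l = j
  · rw [if_pos h, if_pos h, if_pos h, hvw, add_mul]
  · rw [if_neg h, if_neg h, if_neg h, add_zero]

lemma thetaEl_smul (j : Fin m) (x : PaintedAlgebra E) (v : PaintedModule E B) :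
    thetaEl E j (x • v) = x * thetaEl E j v := by
  apply Subtype.ext; ext i l
  show (thetaEl E j (x • v)).val i l = ∑ k, x.val i k * (thetaEl E j v).val k l
  rw [thetaEl_val]
  by_cases h : l = j
  · rw [if_pos h]
    rw [painted_smul_apply]
    rw [Finset.sum_mul]
    refine Finset.sum_congr rfl fun k _ => ?_
    rw [thetaEl_val, if_pos h, smul_eq_mul, mul_assoc]
  · rw [if_neg h]
    refine (Finset.sum_eq_zero fun k _ => ?_).symm
    rw [thetaEl_val, if_neg h, mul_zero]

lemma sum_thetaEl_psingle : ∑ j, thetaEl E j (psingle E j (E.e j)) = 1 := by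
  apply Subtype.ext
  have h1 : (∑ j, thetaEl E j (psingle E j (E.e j))).val
      = ∑ j, (thetaEl E j (psingle E j (E.e j))).val := AddSubmonoidClass.coe_finset_sum _ _
  rw [h1]
  show _ = Matrix.diagonal E.e
  ext i l
  rw [Matrix.sum_apply, Finset.sum_eq_single l]
  · rw [thetaEl_val, if_pos rfl, psingle_val]
    by_cases h : i = l
    · subst h
      rw [if_pos rfl, E.idem i, E.idem i, Matrix.diagonal_apply_eq]
    · rw [if_neg h, zero_mul, Matrix.diagonal_apply_ne _ h]
  · intro j _ hj
    rw [thetaEl_val, if_neg (fun h => hj h.symm)]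
  · intro h; exact absurd (Finset.mem_univ l) h

variable (P : Type*) [AddCommGroup P] [Module (PaintedAlgebra E) P]

/-- The map `v ↦ θ_j(v) • p` from the painted module of `B` to `P`. -/
def psiMap (j : Fin m) (p : P) : PaintedModule E B →ₗ[PaintedAlgebra E] P where
  toFun v := thetaEl E j v • p
  map_add' v w := by
    show thetaEl E j (v + w) • p = thetaEl E j v • p + thetaEl E j w • p
    rw [thetaEl_add, add_smul]
  map_smul' x v := by
    show thetaEl E j (x • v) • p = x • (thetaEl E j v • p)
    rw [thetaEl_smul, mul_smul]

/-- The painted submodule of the painted module of `B` coming from a submodule of `B`. -/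
def pSub (N : Submodule B B) : Submodule (PaintedAlgebra E) (PaintedModule E B) where
  carrier := {v | ∀ i, v.val i ∈ N}
  zero_mem' := by intro i; show (0 : Fin m → B) i ∈ N; simp
  add_mem' := by
    intro v w hv hw i
    have h : (v + w).val i = v.val i + w.val i := rfl
    rw [h]
    exact N.add_mem (hv i) (hw i)
  smul_mem' := by
    intro x v hv i
    rw [painted_smul_apply]
    exact Submodule.sum_mem _ fun j _ => N.smul_mem _ (hv j)

lemma pSub_iSup_top [IsSemisimpleRing B] :
    (⨆ (S : Submodule B B) (_ : IsSimpleModule B ↥S), pSub E S) = ⊤ := by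
  set Q := ⨆ (S : Submodule B B) (_ : IsSimpleModule B ↥S), pSub E S with hQ
  rw [eq_top_iff]
  intro v _
  rw [← sum_psingle E v]
  refine Submodule.sum_mem _ fun i _ => ?_
  have hmem : v.val i ∈ (⊤ : Submodule B B) := trivial
  rw [← IsSemisimpleModule.sSup_simples_eq_top B B, sSup_eq_iSup'] at hmem
  refine Submodule.iSup_induction (M := B)
    (p := fun S : {S : Submodule B B // IsSimpleModule B ↥S} => (S : Submodule B B))
    (motive := fun b => psingle E i b ∈ Q) hmem ?_ ?_ ?_
  · rintro ⟨S, hS⟩ b hb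
    show psingle E i b ∈ Q
    have hle : pSub E S ≤ Q := le_iSup₂ (f := fun (S : Submodule B B) (_ : IsSimpleModule B ↥S) => pSub E S) S hS
    refine hle ?_
    intro l
    rw [psingle_val]
    by_cases h : l = i
    · rw [if_pos h]
      have hmul : E.e i * b = E.e i • b := (smul_eq_mul _ _).symm
      rw [hmul]
      exact S.smul_mem (E.e i) hb
    · rw [if_neg h]
      exact S.zero_mem
  · show psingle E i 0 ∈ Q
    rw [psingle_zero]; exact Submodule.zero_mem _
  · intro b c hb hc
    show psingle E i (b + c) ∈ Q
    rw [psingle_add]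
    exact Submodule.add_mem _ (hb : psingle E i b ∈ Q) (hc : psingle E i c ∈ Q)

/-- Inclusion of the painted module of a submodule of `B` into that of `B`. -/
def pInc (S : Submodule B B) : PaintedModule E ↥S →ₗ[PaintedAlgebra E] PaintedModule E B where
  toFun v := ⟨fun i => (v.val i : B), by
    intro i
    have h := v.prop i
    calc E.e i • (v.val i : B) = ((E.e i • v.val i : S) : B) := rfl
    _ = (v.val i : B) := by rw [h]⟩
  map_add' v w := by
    apply Subtype.ext; funext i
    show (((v + w) : PaintedModule E ↥S).val i : B) = (v.val i : B) + (w.val i : B)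
    rfl
  map_smul' x v := by
    apply Subtype.ext; funext i
    show (((x • v) : PaintedModule E ↥S).val i : B) = ∑ j, x.val i j • (v.val j : B)
    rw [painted_smul_apply]
    push_cast
    rfl

/-- The painted module of a simple module is simple whenever nontrivial. -/
lemma painted_isSimple (S : Type*) [AddCommGroup S] [Module B S]
    (hS : IsSimpleModule B S) [Nontrivial (PaintedModule E S)] :
    IsSimpleModule (PaintedAlgebra E) (PaintedModule E S) := by
  haveI : Nontrivial (Submodule (PaintedAlgebra E) (PaintedModule E S)) :=
    ⟨⊥, ⊤, bot_ne_top⟩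
  refine { toNontrivial := this, eq_bot_or_eq_top := ?_ }
  intro N
  rcases eq_or_ne N ⊥ with h | h
  · exact Or.inl h
  right
  obtain ⟨v, hvN, hv0⟩ := (Submodule.ne_bot_iff N).mp h
  have hvi : ∃ i, v.val i ≠ 0 := by
    by_contra hcon
    push_neg at hcon
    exact hv0 (Subtype.ext (funext fun i => hcon i))
  obtain ⟨i, hvi⟩ := hvi
  have hspan : Submodule.span B {v.val i} = ⊤ := by
    rcases hS.1.2 (Submodule.span B {v.val i}) with h' | h'
    · exact absurd ((Submodule.span_singleton_eq_bot).mp h') hvi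
    · exact h'
  rw [eq_top_iff]
  intro w _
  have hb : ∀ j : Fin m, ∃ b : B, b • v.val i = w.val j := by
    intro j
    have hmem : w.val j ∈ Submodule.span B {v.val i} := by rw [hspan]; trivial
    exact Submodule.mem_span_singleton.mp hmem
  choose b hbspec using hb
  set x : PaintedAlgebra E := ⟨fun j l => if l = i then E.e j * b j * E.e i else 0, by
    intro j l
    show E.e j * (if l = i then E.e j * b j * E.e i else 0) * E.e l
        = (if l = i then E.e j * b j * E.e i else 0)
    by_cases h' : l = i
    · rw [if_pos h', h']
      exact sandwich (E.idem j) (E.idem i)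
    · rw [if_neg h', mul_zero, zero_mul]⟩ with hx
  have hxval : ∀ j l, x.val j l = if l = i then E.e j * b j * E.e i else 0 := fun _ _ => rfl
  have hxv : x • v = w := by
    apply Subtype.ext; funext j
    rw [painted_smul_apply, Finset.sum_eq_single i]
    · rw [hxval, if_pos rfl, mul_smul, mul_smul, e_smul_eq, hbspec j, e_smul_eq]
    · intro l _ hl
      rw [hxval, if_neg hl, zero_smul]
    · intro h'; exact absurd (Finset.mem_univ i) h'
  rw [← hxv]
  exact N.smul_mem x hvN

end Stmt6Aux

/-- Let `B` be a semisimple algebra with distinguished idempotents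
`e₁,…,e_m` and painted algebra `B̃` (whose identity is the diagonal matrix
`diag(e₁,…,e_m)`, i.e. `e₁+⋯+e_m` viewed diagonally).  Then every simple `B̃`-module `P`
is isomorphic to the painted module `S̃` of some simple `B`-module `S`. -/
theorem stmt6 {B : Type} [Ring B] [IsSemisimpleRing B] {m : ℕ} (E : IdemFamily B m)
    (P : Type) [AddCommGroup P] [Module (PaintedAlgebra E) P]
    (hP : IsSimpleModule (PaintedAlgebra E) P) :
    ∃ (S : Type) (i1 : AddCommGroup S), by
      letI := i1
      exact ∃ i2 : Module B S, by
        letI := i2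
        exact IsSimpleModule B S ∧
          Nonempty (P ≃ₗ[PaintedAlgebra E] PaintedModule E S) := by
  haveI : IsSimpleModule (PaintedAlgebra E) P := hP
  haveI : Nontrivial P := IsSimpleModule.nontrivial (PaintedAlgebra E) P
  obtain ⟨p, hp⟩ := exists_ne (0 : P)
  have hpsi : ∃ (j : Fin m) (v : PaintedModule E B), psiMap E P j p v ≠ 0 := by
    by_contra hcon
    push_neg at hcon
    apply hp
    have h1 : p = (∑ j, thetaEl E j (psingle E j (E.e j))) • p := by
      rw [sum_thetaEl_psingle, one_smul]
    rw [h1, Finset.sum_smul]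
    exact Finset.sum_eq_zero fun j _ => hcon j (psingle E j (E.e j))
  obtain ⟨j, v0, hv0⟩ := hpsi
  set ψ := psiMap E P j p with hψdef
  have hS : ∃ (S : Submodule B B), IsSimpleModule B ↥S ∧
      ∃ v ∈ pSub E S, ψ v ≠ 0 := by
    by_contra hcon
    push_neg at hcon
    apply hv0
    have hker : (⨆ (S : Submodule B B) (_ : IsSimpleModule B ↥S), pSub E S) ≤
        LinearMap.ker ψ := by
      refine iSup₂_le fun S hSs => ?_
      intro v hv
      exact LinearMap.mem_ker.mpr (hcon S hSs v hv)
    rw [pSub_iSup_top] at hker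
    exact LinearMap.mem_ker.mp (hker trivial)
  obtain ⟨S, hSsimple, v, hvS, hψv⟩ := hS
  set w : PaintedModule E ↥S := ⟨fun i => ⟨v.val i, hvS i⟩, by
    intro i
    apply Subtype.ext
    show E.e i • v.val i = v.val i
    exact v.prop i⟩ with hwdef
  have hinc : pInc E S w = v := Subtype.ext (funext fun i => rfl)
  set χ : PaintedModule E ↥S →ₗ[PaintedAlgebra E] P := ψ.comp (pInc E S) with hχdef
  have hχw : χ w ≠ 0 := by
    show ψ (pInc E S w) ≠ 0
    rw [hinc]; exact hψv
  haveI : Nontrivial (PaintedModule E ↥S) := by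
    refine ⟨w, 0, fun h => ?_⟩
    apply hχw
    rw [h, map_zero]
  haveI : IsSimpleModule (PaintedAlgebra E) (PaintedModule E ↥S) :=
    painted_isSimple E ↥S hSsimple
  have hχ0 : χ ≠ 0 := fun h => hχw (by rw [h]; rfl)
  have hbij : Function.Bijective χ := (LinearMap.bijective_or_eq_zero χ).resolve_right hχ0
  exact ⟨↥S, inferInstance, inferInstance, hSsimple,
    ⟨(LinearEquiv.ofBijective χ hbij).symm⟩⟩
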